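/- Let f : ℝⁿ → ℝᵐ be continuous, A > 0, α ∈ (0,1), and φ : ℝⁿ → [0,∞) a continuous radially symmetric function supported in B₁(0) with ∫ φ = 1 and φ ≥ c > 0 on B_{1/2}(0). Suppose that for every x ∈ ℝⁿ and r > 0 there exists a constant vector f̄(x,r) ∈ ℝᵐ such that ∫_{B₁} |f(x + r y) − f̄(x,r)|² φ(y) dy ≤ A² r^{2α}. Then there is a constant B depending only on n, α, and φ such that |f(x) − f(y)| ≤ B A |x − y|^α for all x, y ∈ ℝⁿ. -/

import Mathlib

open MeasureTheory Metric Real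

lemma camp_scale {n : ℕ} (h : EuclideanSpace ℝ (Fin n) → ℝ)
    (x z : EuclideanSpace ℝ (Fin n)) (r t : ℝ) (hr : 0 < r) :
    ∫ y in closedBall (r⁻¹ • (z - x)) (t / r), h (x + r • y) =
      (r ^ n)⁻¹ * ∫ w in closedBall z t, h w := by
  have hmem : ∀ y : EuclideanSpace ℝ (Fin n),
      y ∈ closedBall (r⁻¹ • (z - x)) (t / r) ↔ x + r • y ∈ closedBall z t := by
    intro y
    simp only [mem_closedBall, dist_eq_norm]
    have h1 : x + r • y - z = r • (y - r⁻¹ • (z - x)) := by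
      rw [smul_sub, smul_smul, mul_inv_cancel₀ hr.ne', one_smul]
      abel
    rw [h1, norm_smul, Real.norm_eq_abs, abs_of_pos hr, ← le_div_iff₀' hr]
  have hind : ∀ y : EuclideanSpace ℝ (Fin n),
      (closedBall (r⁻¹ • (z - x)) (t / r)).indicator (fun y => h (x + r • y)) y
        = (closedBall z t).indicator h (x + r • y) := by
    intro y
    by_cases hy : y ∈ closedBall (r⁻¹ • (z - x)) (t / r)
    · rw [Set.indicator_of_mem hy, Set.indicator_of_mem ((hmem y).1 hy)]
    · rw [Set.indicator_of_notMem hy, Set.indicator_of_notMem (fun hmem2 => hy ((hmem y).2 hmem2))]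
  calc ∫ y in closedBall (r⁻¹ • (z - x)) (t / r), h (x + r • y)
      = ∫ y, (closedBall (r⁻¹ • (z - x)) (t / r)).indicator (fun y => h (x + r • y)) y := by
        rw [integral_indicator measurableSet_closedBall]
    _ = ∫ y, (fun u => (closedBall z t).indicator h (x + u)) (r • y) := by
        simp_rw [hind]
    _ = |(r ^ n)⁻¹| * ∫ u, (closedBall z t).indicator h (x + u) := by
        rw [Measure.integral_comp_smul volume (fun u => (closedBall z t).indicator h (x + u)) r,
          finrank_euclideanSpace_fin, smul_eq_mul]
    _ = (r ^ n)⁻¹ * ∫ w in closedBall z t, h w := by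
        rw [abs_of_pos (by positivity), integral_add_left_eq_self, integral_indicator measurableSet_closedBall]


lemma camp_intI {n m : ℕ} {α : ℝ} {φ : EuclideanSpace ℝ (Fin n) → ℝ} {c : ℝ}
    (hφcont : Continuous φ) (hφ : ∀ y, 0 ≤ φ y)
    (hφlow : ∀ y ∈ ball (0 : EuclideanSpace ℝ (Fin n)) (1 / 2), c ≤ φ y)
    {f : EuclideanSpace ℝ (Fin n) → EuclideanSpace ℝ (Fin m)} (hf : Continuous f)
    {A : ℝ} (fb : EuclideanSpace ℝ (Fin m)) (x : EuclideanSpace ℝ (Fin n))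
    {r : ℝ} (hr : 0 < r)
    (hint : ∫ y in ball (0 : EuclideanSpace ℝ (Fin n)) 1,
        ‖f (x + r • y) - fb‖ ^ 2 * φ y ≤ A ^ 2 * r ^ (2 * α))
    (z : EuclideanSpace ℝ (Fin n)) (t : ℝ) (hzt : ‖z - x‖ + t ≤ 3 * r / 8) :
    c * ∫ w in closedBall z t, ‖f w - fb‖ ^ 2 ≤ r ^ n * (A ^ 2 * r ^ (2 * α)) := by
  set T : Set (EuclideanSpace ℝ (Fin n)) := closedBall (r⁻¹ • (z - x)) (t / r) with hT
  have hTsub : T ⊆ ball (0 : EuclideanSpace ℝ (Fin n)) (1 / 2) := by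
    intro y hy
    simp only [hT, mem_closedBall, dist_eq_norm] at hy
    simp only [mem_ball, dist_zero_right]
    have h1 : ‖y‖ ≤ t / r + ‖z - x‖ / r := by
      calc ‖y‖ ≤ ‖y - r⁻¹ • (z - x)‖ + ‖r⁻¹ • (z - x)‖ := by
            simpa using norm_add_le (y - r⁻¹ • (z - x)) (r⁻¹ • (z - x))
        _ ≤ t / r + ‖z - x‖ / r := by
            rw [norm_smul, Real.norm_eq_abs, abs_of_pos (inv_pos.2 hr)]
            rw [inv_mul_eq_div]
            linarith
    have h2 : t / r + ‖z - x‖ / r ≤ 3 / 8 := by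
      rw [← add_div, div_le_div_iff₀ hr (by norm_num)]
      nlinarith
    linarith
  set g : EuclideanSpace ℝ (Fin n) → ℝ := fun y => ‖f (x + r • y) - fb‖ ^ 2 with hg
  have hgcont : Continuous g := by
    apply Continuous.pow
    exact ((hf.comp (continuous_const.add (continuous_const_smul r))).sub continuous_const).norm
  have hgnon : ∀ y, 0 ≤ g y := fun y => sq_nonneg _
  have key : c * ∫ y in T, g y ≤ A ^ 2 * r ^ (2 * α) := by
    calc c * ∫ y in T, g y = ∫ y in T, c * g y := (integral_const_mul c g).symm
      _ ≤ ∫ y in T, g y * φ y := by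
          apply setIntegral_mono_on
          · exact ((continuous_const.mul hgcont).continuousOn).integrableOn_compact (isCompact_closedBall _ _)
          · exact ((hgcont.mul hφcont).continuousOn).integrableOn_compact (isCompact_closedBall _ _)
          · exact measurableSet_closedBall
          · intro y hy
            calc c * g y = g y * c := mul_comm _ _
              _ ≤ g y * φ y := mul_le_mul_of_nonneg_left (hφlow y (hTsub hy)) (hgnon y)
      _ ≤ ∫ y in ball (0 : EuclideanSpace ℝ (Fin n)) 1, g y * φ y := by
          apply setIntegral_mono_set
          · exact (((hgcont.mul hφcont).continuousOn).integrableOn_compact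
              (isCompact_closedBall 0 1)).mono_set ball_subset_closedBall
          · exact Filter.Eventually.of_forall fun y => mul_nonneg (hgnon y) (hφ y)
          · exact HasSubset.Subset.eventuallyLE
              (hTsub.trans (ball_subset_ball (by norm_num)))
      _ ≤ A ^ 2 * r ^ (2 * α) := hint
  have hsc := camp_scale (fun w => ‖f w - fb‖ ^ 2) x z r t hr
  rw [hT] at key
  rw [hsc] at key
  have hrn : (0:ℝ) < r ^ n := pow_pos hr n
  calc c * ∫ w in closedBall z t, ‖f w - fb‖ ^ 2
      = r ^ n * (c * ((r ^ n)⁻¹ * ∫ w in closedBall z t, ‖f w - fb‖ ^ 2)) := by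
        field_simp
    _ ≤ r ^ n * (A ^ 2 * r ^ (2 * α)) := by
        exact mul_le_mul_of_nonneg_left key hrn.le

lemma camp_min {n m : ℕ} {c : ℝ} (hc : 0 < c)
    {f : EuclideanSpace ℝ (Fin n) → EuclideanSpace ℝ (Fin m)} (hf : Continuous f)
    (fb₁ fb₂ : EuclideanSpace ℝ (Fin m)) (z : EuclideanSpace ℝ (Fin n))
    {t : ℝ} (ht : 0 < t) {Q₁ Q₂ : ℝ}
    (h1 : c * ∫ w in closedBall z t, ‖f w - fb₁‖ ^ 2 ≤ Q₁)
    (h2 : c * ∫ w in closedBall z t, ‖f w - fb₂‖ ^ 2 ≤ Q₂) :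
    ∃ w ∈ closedBall z t,
      (‖f w - fb₁‖ ^ 2 + ‖f w - fb₂‖ ^ 2) *
        (c * (t ^ n * (volume (ball (0 : EuclideanSpace ℝ (Fin n)) 1)).toReal)) ≤ Q₁ + Q₂ := by
  set g : EuclideanSpace ℝ (Fin n) → ℝ :=
    fun w => ‖f w - fb₁‖ ^ 2 + ‖f w - fb₂‖ ^ 2 with hg
  have hg1 : Continuous fun w => ‖f w - fb₁‖ ^ 2 := ((hf.sub continuous_const).norm).pow 2
  have hg2 : Continuous fun w => ‖f w - fb₂‖ ^ 2 := ((hf.sub continuous_const).norm).pow 2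
  have hgcont : Continuous g := hg1.add hg2
  obtain ⟨w, hwS, hwmin⟩ := (isCompact_closedBall z t).exists_isMinOn
    (nonempty_closedBall.2 ht.le) hgcont.continuousOn
  refine ⟨w, hwS, ?_⟩
  have hvol : (volume (closedBall z t)).toReal
      = t ^ n * (volume (ball (0 : EuclideanSpace ℝ (Fin n)) 1)).toReal := by
    rw [Measure.addHaar_closedBall volume z ht.le, ENNReal.toReal_mul,
      ENNReal.toReal_ofReal (pow_nonneg ht.le _), finrank_euclideanSpace_fin]
  have hge : g w * (volume (closedBall z t)).toReal ≤ ∫ v in closedBall z t, g v := by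
    apply setIntegral_ge_of_const_le_real measurableSet_closedBall measure_closedBall_lt_top.ne
      (fun v hv => hwmin hv)
    exact (hgcont.continuousOn).integrableOn_compact (isCompact_closedBall z t)
  have hsplit : ∫ v in closedBall z t, g v
      = (∫ v in closedBall z t, ‖f v - fb₁‖ ^ 2) + ∫ v in closedBall z t, ‖f v - fb₂‖ ^ 2 :=
    integral_add ((hg1.continuousOn).integrableOn_compact (isCompact_closedBall z t))
      ((hg2.continuousOn).integrableOn_compact (isCompact_closedBall z t))
  calc g w * (c * (t ^ n * (volume (ball (0 : EuclideanSpace ℝ (Fin n)) 1)).toReal))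
      = c * (g w * (volume (closedBall z t)).toReal) := by rw [hvol]; ring
    _ ≤ c * ∫ v in closedBall z t, g v := mul_le_mul_of_nonneg_left hge hc.le
    _ ≤ Q₁ + Q₂ := by rw [hsplit, mul_add]; exact add_le_add h1 h2

lemma camp_norm_bound {M : Type*} [NormedAddCommGroup M] (fw F₁ F₂ : M) {R : ℝ}
    (h : ‖fw - F₁‖ ^ 2 + ‖fw - F₂‖ ^ 2 ≤ R) : ‖F₁ - F₂‖ ≤ 2 * Real.sqrt R := by
  have h1 : ‖F₁ - F₂‖ ≤ ‖fw - F₁‖ + ‖fw - F₂‖ := by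
    calc ‖F₁ - F₂‖ = ‖(fw - F₂) - (fw - F₁)‖ := by rw [sub_sub_sub_cancel_left]
      _ ≤ ‖fw - F₂‖ + ‖fw - F₁‖ := norm_sub_le _ _
      _ = ‖fw - F₁‖ + ‖fw - F₂‖ := add_comm _ _
  have h2 : ‖fw - F₁‖ ≤ Real.sqrt R := by
    rw [← Real.sqrt_sq (norm_nonneg (fw - F₁))]
    exact Real.sqrt_le_sqrt (by nlinarith [sq_nonneg ‖fw - F₂‖])
  have h3 : ‖fw - F₂‖ ≤ Real.sqrt R := by
    rw [← Real.sqrt_sq (norm_nonneg (fw - F₂))]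
    exact Real.sqrt_le_sqrt (by nlinarith [sq_nonneg ‖fw - F₁‖])
  linarith

lemma camp_sqrt {α A r C s : ℝ} (hA : 0 < A) (hr : 0 < r) (hC : 0 ≤ C) (hs : 0 ≤ s)
    (h : s ^ 2 ≤ C * (A ^ 2 * r ^ (2 * α))) : s ≤ Real.sqrt C * (A * r ^ α) := by
  have hAr : 0 < A * r ^ α := mul_pos hA (Real.rpow_pos_of_pos hr α)
  have hpow : A ^ 2 * r ^ (2 * α) = (A * r ^ α) ^ 2 := by
    rw [mul_pow, ← Real.rpow_natCast (r ^ α) 2, ← Real.rpow_mul hr.le]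
    norm_num [mul_comm]
  have h2 : s ^ 2 ≤ (Real.sqrt C * (A * r ^ α)) ^ 2 := by
    rw [mul_pow, Real.sq_sqrt hC, ← hpow]
    exact h
  calc s = Real.sqrt (s ^ 2) := (Real.sqrt_sq hs).symm
    _ ≤ Real.sqrt ((Real.sqrt C * (A * r ^ α)) ^ 2) := Real.sqrt_le_sqrt h2
    _ = Real.sqrt C * (A * r ^ α) := Real.sqrt_sq (by positivity)

lemma camp_pair {M : Type*} [NormedAddCommGroup M] {fw F₁ F₂ : M} {α A r C : ℝ}
    (hA : 0 < A) (hr : 0 < r) (hC : 0 ≤ C)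
    (h : ‖fw - F₁‖ ^ 2 + ‖fw - F₂‖ ^ 2 ≤ C * (A ^ 2 * r ^ (2 * α))) :
    ‖F₁ - F₂‖ ≤ 2 * Real.sqrt C * (A * r ^ α) := by
  have h1 : ‖fw - F₁‖ ≤ Real.sqrt C * (A * r ^ α) :=
    camp_sqrt hA hr hC (norm_nonneg _) (le_trans (by nlinarith [sq_nonneg ‖fw - F₂‖]) h)
  have h2 : ‖fw - F₂‖ ≤ Real.sqrt C * (A * r ^ α) :=
    camp_sqrt hA hr hC (norm_nonneg _) (le_trans (by nlinarith [sq_nonneg ‖fw - F₁‖]) h)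
  have h3 : ‖F₁ - F₂‖ ≤ ‖fw - F₁‖ + ‖fw - F₂‖ := by
    calc ‖F₁ - F₂‖ = ‖(fw - F₂) - (fw - F₁)‖ := by rw [sub_sub_sub_cancel_left]
      _ ≤ ‖fw - F₂‖ + ‖fw - F₁‖ := norm_sub_le _ _
      _ = ‖fw - F₁‖ + ‖fw - F₂‖ := add_comm _ _
  linarith

/-- Campanato's characterization of Hölder spaces: uniform `r^{2α}` decay of
local weighted L² oscillations implies `C^α` regularity. -/
theorem stmt_2 (n m : ℕ) (α : ℝ) (hα : α ∈ Set.Ioo (0 : ℝ) 1)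
    (φ : EuclideanSpace ℝ (Fin n) → ℝ) (c : ℝ) (hc : 0 < c)
    (hφcont : Continuous φ) (hφ : ∀ y, 0 ≤ φ y)
    (hφrad : ∀ y z : EuclideanSpace ℝ (Fin n), ‖y‖ = ‖z‖ → φ y = φ z)
    (hφsupp : tsupport φ ⊆ ball 0 1)
    (hφ1 : ∫ y in ball (0 : EuclideanSpace ℝ (Fin n)) 1, φ y = 1)
    (hφlow : ∀ y ∈ ball (0 : EuclideanSpace ℝ (Fin n)) (1 / 2), c ≤ φ y) :
    ∃ B : ℝ, 0 < B ∧
      ∀ (f : EuclideanSpace ℝ (Fin n) → EuclideanSpace ℝ (Fin m)) (A : ℝ),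
        Continuous f → 0 < A →
        (∀ (x : EuclideanSpace ℝ (Fin n)) (r : ℝ), 0 < r →
          ∃ fbar : EuclideanSpace ℝ (Fin m),
            ∫ y in ball (0 : EuclideanSpace ℝ (Fin n)) 1,
                ‖f (x + r • y) - fbar‖ ^ 2 * φ y ≤ A ^ 2 * r ^ (2 * α)) →
        ∀ x y : EuclideanSpace ℝ (Fin n), ‖f x - f y‖ ≤ B * A * ‖x - y‖ ^ α := by
  obtain ⟨hα0, hα1⟩ := hα
  set Vb := (volume (ball (0 : EuclideanSpace ℝ (Fin n)) 1)).toReal with hVb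
  have hVb0 : 0 < Vb :=
    ENNReal.toReal_pos (measure_ball_pos volume _ one_pos).ne' measure_ball_lt_top.ne
  set D := c * Vb with hD
  have hD0 : 0 < D := mul_pos hc hVb0
  set q := (2 : ℝ) ^ (-α) with hq
  have hq0 : 0 < q := Real.rpow_pos_of_pos (by norm_num) _
  have hq1 : q < 1 := by
    rw [hq]
    calc (2:ℝ) ^ (-α) < 2 ^ (0:ℝ) :=
          Real.rpow_lt_rpow_of_exponent_lt (by norm_num) (by linarith)
      _ = 1 := Real.rpow_zero 2
  set K₀ := Real.sqrt ((16:ℝ) ^ n / D) with hK₀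
  have hK₀0 : 0 < K₀ := Real.sqrt_pos.2 (by positivity)
  set K₁ := 2 * Real.sqrt (2 * (16:ℝ) ^ n / D) with hK₁
  have hK₁0 : 0 ≤ K₁ := by positivity
  set K₂ := 2 * Real.sqrt (2 * ((8:ℝ) ^ n * 64) / D) with hK₂
  have hK₂0 : 0 ≤ K₂ := by positivity
  set L := K₁ * (1 - q)⁻¹ with hL
  have hL0 : 0 ≤ L := mul_nonneg hK₁0 (inv_nonneg.2 (by linarith))
  refine ⟨16 * L + K₂ + 1, by positivity, ?_⟩
  intro f A hf hA hcamp x y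
  choose F₀ hF₀ using hcamp
  set F : EuclideanSpace ℝ (Fin n) → ℝ → EuclideanSpace ℝ (Fin m) :=
    fun z r => if hr : 0 < r then F₀ z r hr else 0 with hFdef
  have hF : ∀ (z : EuclideanSpace ℝ (Fin n)) (r : ℝ) (hr : 0 < r),
      ∫ u in ball (0 : EuclideanSpace ℝ (Fin n)) 1,
        ‖f (z + r • u) - F z r‖ ^ 2 * φ u ≤ A ^ 2 * r ^ (2 * α) := by
    intro z r hr
    simp only [hFdef, dif_pos hr]
    exact hF₀ z r hr
  -- the basic comparison estimate
  have comp : ∀ (x₁ x₂ z : EuclideanSpace ℝ (Fin n)) (r₁ r₂ t : ℝ),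
      0 < r₁ → 0 < r₂ → 0 < t → ‖z - x₁‖ + t ≤ 3 * r₁ / 8 → ‖z - x₂‖ + t ≤ 3 * r₂ / 8 →
      ∃ w ∈ closedBall z t,
        (‖f w - F x₁ r₁‖ ^ 2 + ‖f w - F x₂ r₂‖ ^ 2) * (c * (t ^ n * Vb)) ≤
          r₁ ^ n * (A ^ 2 * r₁ ^ (2 * α)) + r₂ ^ n * (A ^ 2 * r₂ ^ (2 * α)) := by
    intro x₁ x₂ z r₁ r₂ t h1 h2 ht hz1 hz2
    exact camp_min hc hf _ _ z ht
      (camp_intI hφcont hφ hφlow hf _ x₁ h1 (hF x₁ r₁ h1) z t hz1)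
      (camp_intI hφcont hφ hφlow hf _ x₂ h2 (hF x₂ r₂ h2) z t hz2)
  -- single-scale telescoping step
  have step : ∀ (z : EuclideanSpace ℝ (Fin n)) (ρ : ℝ), 0 < ρ →
      ‖F z ρ - F z (ρ / 2)‖ ≤ K₁ * (A * ρ ^ α) := by
    intro z ρ hρ
    obtain ⟨w, hw, hQ⟩ := comp z z z ρ (ρ / 2) (ρ / 16) hρ (half_pos hρ) (by positivity)
      (by simp only [sub_self, norm_zero]; linarith) (by simp only [sub_self, norm_zero]; linarith)
    have hpos : (0:ℝ) < c * ((ρ / 16) ^ n * Vb) := by positivity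
    have hmono : (ρ/2) ^ n * (A ^ 2 * (ρ/2) ^ (2*α)) ≤ ρ ^ n * (A ^ 2 * ρ ^ (2*α)) := by
      apply mul_le_mul (pow_le_pow_left₀ (by positivity) (by linarith) n)
        (mul_le_mul_of_nonneg_left
          (Real.rpow_le_rpow (by positivity) (by linarith) (by positivity)) (sq_nonneg A))
        (by positivity) (by positivity)
    have hQ2 : ‖f w - F z ρ‖ ^ 2 + ‖f w - F z (ρ/2)‖ ^ 2
        ≤ (2 * (16:ℝ) ^ n / D) * (A ^ 2 * ρ ^ (2*α)) := by
      rw [← le_div_iff₀ hpos] at hQ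
      calc ‖f w - F z ρ‖ ^ 2 + ‖f w - F z (ρ/2)‖ ^ 2
          ≤ (ρ ^ n * (A ^ 2 * ρ ^ (2*α)) + (ρ/2) ^ n * (A ^ 2 * (ρ/2) ^ (2*α)))
              / (c * ((ρ/16) ^ n * Vb)) := hQ
        _ ≤ (2 * (ρ ^ n * (A ^ 2 * ρ ^ (2*α)))) / (c * ((ρ/16) ^ n * Vb)) := by
            apply div_le_div_of_nonneg_right ?_ hpos.le
            linarith
        _ = (2 * (16:ℝ) ^ n / D) * (A ^ 2 * ρ ^ (2*α)) := by
            rw [div_pow, hD]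
            field_simp
    have h11 := camp_pair (fw := f w) hA hρ (by positivity) hQ2
    rw [hK₁]
    exact h11
  -- nearby point with small oscillation
  have near : ∀ (z : EuclideanSpace ℝ (Fin n)) (ρ : ℝ), 0 < ρ →
      ∃ w ∈ closedBall z (ρ / 16), ‖f w - F z ρ‖ ≤ K₀ * (A * ρ ^ α) := by
    intro z ρ hρ
    obtain ⟨w, hw, hQ⟩ := comp z z z ρ ρ (ρ / 16) hρ hρ (by positivity)
      (by simp only [sub_self, norm_zero]; linarith) (by simp only [sub_self, norm_zero]; linarith)
    refine ⟨w, hw, ?_⟩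
    have hpos : (0:ℝ) < c * ((ρ / 16) ^ n * Vb) := by positivity
    have hQ2 : ‖f w - F z ρ‖ ^ 2 ≤ ((16:ℝ) ^ n / D) * (A ^ 2 * ρ ^ (2*α)) := by
      rw [← le_div_iff₀ hpos] at hQ
      have h3 : ‖f w - F z ρ‖ ^ 2 + ‖f w - F z ρ‖ ^ 2
          ≤ (2 * (ρ ^ n * (A ^ 2 * ρ ^ (2*α)))) / (c * ((ρ/16) ^ n * Vb)) := by
        refine le_trans hQ ?_
        apply div_le_div_of_nonneg_right (by linarith) hpos.le
      have h4 : (2 * (ρ ^ n * (A ^ 2 * ρ ^ (2*α)))) / (c * ((ρ/16) ^ n * Vb))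
          = 2 * (((16:ℝ) ^ n / D) * (A ^ 2 * ρ ^ (2*α))) := by
        rw [div_pow, hD]
        field_simp
      rw [h4] at h3
      linarith
    exact camp_sqrt hA hρ (by positivity) (norm_nonneg _) hQ2
  -- telescoping estimate
  have tele : ∀ (z : EuclideanSpace ℝ (Fin n)) (r : ℝ), 0 < r →
      ‖f z - F z r‖ ≤ L * (A * r ^ α) := by
    intro z r hr
    have hpow2 : ∀ N : ℕ, (0:ℝ) < r / 2 ^ N := fun N => by positivity
    have hqpow : ∀ k : ℕ, (r / 2 ^ k) ^ α = r ^ α * q ^ k := by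
      intro k
      rw [hq, ← Real.rpow_natCast ((2:ℝ) ^ (-α)) k, ← Real.rpow_mul (by norm_num),
        Real.div_rpow hr.le (by positivity), ← Real.rpow_natCast (2:ℝ) k,
        ← Real.rpow_mul (by norm_num), div_eq_mul_inv, ← Real.rpow_neg (by norm_num)]
      congr 1
      ring
    have chain : ∀ N : ℕ, ‖F z r - F z (r / 2 ^ N)‖
        ≤ K₁ * A * ∑ k ∈ Finset.range N, (r / 2 ^ k) ^ α := by
      intro N
      induction N with
      | zero => simp
      | succ N ih =>
        have h1 : r / 2 ^ (N + 1) = (r / 2 ^ N) / 2 := by rw [pow_succ]; ring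
        have h2 := step z (r / 2 ^ N) (hpow2 N)
        rw [← h1] at h2
        calc ‖F z r - F z (r / 2 ^ (N+1))‖
            ≤ ‖F z r - F z (r / 2 ^ N)‖ + ‖F z (r / 2 ^ N) - F z (r / 2 ^ (N+1))‖ := by
              simpa [dist_eq_norm] using
                dist_triangle (F z r) (F z (r / 2 ^ N)) (F z (r / 2 ^ (N+1)))
          _ ≤ K₁ * A * ∑ k ∈ Finset.range N, (r / 2 ^ k) ^ α + K₁ * (A * (r / 2 ^ N) ^ α) :=
              add_le_add ih h2
          _ = K₁ * A * ∑ k ∈ Finset.range (N+1), (r / 2 ^ k) ^ α := by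
              rw [Finset.sum_range_succ]; ring
    have hsum : ∀ N : ℕ, K₁ * A * ∑ k ∈ Finset.range N, (r / 2 ^ k) ^ α ≤ L * (A * r ^ α) := by
      intro N
      have hs1 : ∑ k ∈ Finset.range N, (r / 2 ^ k) ^ α
          = r ^ α * ∑ k ∈ Finset.range N, q ^ k := by
        rw [Finset.mul_sum]
        exact Finset.sum_congr rfl fun k _ => hqpow k
      have hge : ∑ k ∈ Finset.range N, q ^ k ≤ (1 - q)⁻¹ := by
        rw [geom_sum_eq hq1.ne N]
        have h1q : (0:ℝ) < 1 - q := by linarith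
        have he : (q ^ N - 1) / (q - 1) = (1 - q ^ N) / (1 - q) := by
          rw [← neg_div_neg_eq]; ring_nf
        rw [he]
        calc (1 - q ^ N) / (1 - q) ≤ 1 / (1 - q) := by
              apply div_le_div_of_nonneg_right ?_ h1q.le
              have := pow_nonneg hq0.le N
              linarith
          _ = (1 - q)⁻¹ := one_div _
      rw [hs1]
      calc K₁ * A * (r ^ α * ∑ k ∈ Finset.range N, q ^ k)
          ≤ K₁ * A * (r ^ α * (1 - q)⁻¹) := by
            apply mul_le_mul_of_nonneg_left
              (mul_le_mul_of_nonneg_left hge (Real.rpow_nonneg hr.le α))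
              (by positivity)
        _ = L * (A * r ^ α) := by rw [hL]; ring
    apply le_of_forall_pos_le_add
    intro ε hε
    obtain ⟨δ, hδ0, hδ⟩ := Metric.continuous_iff.mp hf z (ε/2) (by linarith)
    set β := (ε / (2 * (K₀ * A))) ^ (α⁻¹) with hβdef
    have hβ : 0 < β := Real.rpow_pos_of_pos (by positivity) _
    obtain ⟨N, hN⟩ := exists_pow_lt_of_lt_one
      (x := min (16 * δ / r) (β / r)) (by positivity) (by norm_num : (1:ℝ)/2 < 1)
    have h2N : r / 2 ^ N = r * (1/2 : ℝ) ^ N := by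
      rw [one_div, inv_pow]; ring
    have hNδ : r / 2 ^ N / 16 < δ := by
      have h5 := lt_of_lt_of_le hN (min_le_left _ _)
      have h4 := mul_lt_mul_of_pos_left h5 hr
      rw [show r * (16 * δ / r) = 16 * δ from by field_simp] at h4
      rw [h2N]; linarith
    have hNβ : r / 2 ^ N ≤ β := by
      have h5 := lt_of_lt_of_le hN (min_le_right _ _)
      have h4 := mul_lt_mul_of_pos_left h5 hr
      rw [show r * (β / r) = β from by field_simp] at h4
      rw [h2N]; linarith
    have hNα : K₀ * (A * (r / 2 ^ N) ^ α) ≤ ε / 2 := by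
      have h5 : (r / 2 ^ N) ^ α ≤ β ^ α := Real.rpow_le_rpow (by positivity) hNβ hα0.le
      have h6 : β ^ α = ε / (2 * (K₀ * A)) := Real.rpow_inv_rpow (by positivity) hα0.ne'
      rw [h6] at h5
      calc K₀ * (A * (r / 2 ^ N) ^ α) ≤ K₀ * (A * (ε / (2 * (K₀ * A)))) := by
            apply mul_le_mul_of_nonneg_left (mul_le_mul_of_nonneg_left h5 hA.le) hK₀0.le
        _ = ε / 2 := by field_simp
    obtain ⟨w, hw, hwb⟩ := near z (r / 2 ^ N) (hpow2 N)
    have hfw : ‖f z - f w‖ ≤ ε / 2 := by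
      have h7 : dist w z < δ := lt_of_le_of_lt (mem_closedBall.mp hw) (by linarith [hNδ, hpow2 N])
      have h8 := hδ w h7
      rw [dist_eq_norm, norm_sub_rev] at h8
      linarith
    calc ‖f z - F z r‖ ≤ ‖f z - F z (r / 2 ^ N)‖ + ‖F z (r / 2 ^ N) - F z r‖ := by
          simpa [dist_eq_norm] using dist_triangle (f z) (F z (r / 2 ^ N)) (F z r)
      _ ≤ (‖f z - f w‖ + ‖f w - F z (r / 2 ^ N)‖) + K₁ * A * ∑ k ∈ Finset.range N, (r/2^k) ^ α := by
          apply add_le_add ?_ (by rw [norm_sub_rev]; exact chain N)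
          simpa [dist_eq_norm] using dist_triangle (f z) (f w) (F z (r / 2 ^ N))
      _ ≤ (ε/2 + ε/2) + L * (A * r ^ α) :=
          add_le_add (add_le_add hfw (hwb.trans hNα)) (hsum N)
      _ = L * (A * r ^ α) + ε := by ring
  -- conclusion
  by_cases hxy : x = y
  · subst hxy
    simp [sub_self, Real.zero_rpow hα0.ne']
  · have hd : 0 < ‖x - y‖ := norm_pos_iff.2 (sub_ne_zero.2 hxy)
    set d := ‖x - y‖ with hddef
    set R := 8 * d with hR
    have hR0 : 0 < R := by positivity
    obtain ⟨w, hw, hQ⟩ := comp x y x R R d hR0 hR0 hd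
      (by simp only [sub_self, norm_zero]; rw [hR]; linarith)
      (by rw [← hddef, hR]; linarith)
    have hpos : (0:ℝ) < c * (d ^ n * Vb) := by positivity
    have hbound : ‖f w - F x R‖ ^ 2 + ‖f w - F y R‖ ^ 2
        ≤ (2 * ((8:ℝ) ^ n * 64) / D) * (A ^ 2 * d ^ (2*α)) := by
      have hRn : R ^ n = 8 ^ n * d ^ n := by rw [hR, mul_pow]
      have h82 : (8:ℝ) ^ (2*α) ≤ 64 := by
        calc (8:ℝ) ^ (2*α) ≤ 8 ^ (2:ℝ) :=
              Real.rpow_le_rpow_of_exponent_le (by norm_num) (by linarith)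
          _ = 64 := by
              rw [show (2:ℝ) = ((2:ℕ):ℝ) from by norm_num, Real.rpow_natCast]; norm_num
      have hRα : R ^ (2*α) ≤ 64 * d ^ (2*α) := by
        rw [hR, Real.mul_rpow (by norm_num) hd.le]
        exact mul_le_mul_of_nonneg_right h82 (Real.rpow_nonneg hd.le _)
      rw [← le_div_iff₀ hpos] at hQ
      calc ‖f w - F x R‖ ^ 2 + ‖f w - F y R‖ ^ 2
          ≤ (R ^ n * (A ^ 2 * R ^ (2*α)) + R ^ n * (A ^ 2 * R ^ (2*α))) / (c * (d ^ n * Vb)) :=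
            hQ
        _ ≤ (2 * (8 ^ n * d ^ n * (A ^ 2 * (64 * d ^ (2*α))))) / (c * (d ^ n * Vb)) := by
            apply div_le_div_of_nonneg_right ?_ hpos.le
            have h9 : R ^ n * (A ^ 2 * R ^ (2*α)) ≤ 8 ^ n * d ^ n * (A ^ 2 * (64 * d ^ (2*α))) := by
              rw [hRn]
              apply mul_le_mul_of_nonneg_left ?_ (by positivity)
              exact mul_le_mul_of_nonneg_left hRα (sq_nonneg A)
            linarith
        _ = (2 * ((8:ℝ) ^ n * 64) / D) * (A ^ 2 * d ^ (2*α)) := by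
            rw [hD]
            field_simp
    have hFF : ‖F x R - F y R‖ ≤ K₂ * (A * d ^ α) := by
      have h11 := camp_pair (fw := f w) hA hd (by positivity) hbound
      rw [hK₂]
      exact h11
    have hx1 : ‖f x - F x R‖ ≤ L * (A * R ^ α) := tele x R hR0
    have hy1 : ‖f y - F y R‖ ≤ L * (A * R ^ α) := tele y R hR0
    have hRα1 : R ^ α ≤ 8 * d ^ α := by
      rw [hR, Real.mul_rpow (by norm_num) hd.le]
      have h8a : (8:ℝ) ^ α ≤ 8 := by
        calc (8:ℝ) ^ α ≤ 8 ^ (1:ℝ) := Real.rpow_le_rpow_of_exponent_le (by norm_num) hα1.le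
          _ = 8 := Real.rpow_one 8
      exact mul_le_mul_of_nonneg_right h8a (Real.rpow_nonneg hd.le α)
    have hdα : 0 < A * d ^ α := mul_pos hA (Real.rpow_pos_of_pos hd α)
    calc ‖f x - f y‖ ≤ ‖f x - F x R‖ + ‖F x R - F y R‖ + ‖F y R - f y‖ := by
          simpa [dist_eq_norm] using dist_triangle4 (f x) (F x R) (F y R) (f y)
      _ ≤ L * (A * R ^ α) + K₂ * (A * d ^ α) + L * (A * R ^ α) := by
          refine add_le_add (add_le_add hx1 hFF) ?_
          rw [norm_sub_rev]; exact hy1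
      _ ≤ L * (A * (8 * d ^ α)) + K₂ * (A * d ^ α) + L * (A * (8 * d ^ α)) := by
          have h10 : L * (A * R ^ α) ≤ L * (A * (8 * d ^ α)) :=
            mul_le_mul_of_nonneg_left (mul_le_mul_of_nonneg_left hRα1 hA.le) hL0
          linarith
      _ = (16 * L + K₂) * (A * d ^ α) := by ring
      _ ≤ (16 * L + K₂ + 1) * A * d ^ α := by
          rw [mul_assoc]
          exact mul_le_mul_of_nonneg_right (by linarith) hdα.le
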